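/- arXiv:2012.08010 — 2 statements merged into one kernel-verified Lean document; each statement's English description precedes it below -/
import Mathlib

section
/- Let n ≥ 1 and let X = ⟨X₀ ⊔ ⋯ ⊔ Xₙ; {g_k}, {≤ᵏ}, {≤ʲᵏ}, T⟩ be a multi-sorted topological structure in the signature of M̃_n. Then X belongs to IScP(M̃_n), i.e., X is isomorphic to a topologically closed substructure of a power M̃_nˢ for some nonempty set S, if and only if X satisfies axioms (A1)–(A7). -/
/-!
STATEMENT 0: Let n ≥ 1 and let X = ⟨X₀ ⊔ ⋯ ⊔ Xₙ; {g_k}, {≤ᵏ}, {≤ʲᵏ}, T⟩ be a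
multi-sorted topological structure in the signature of M̃_n.  Then X belongs to
IScP(M̃_n), i.e., X is isomorphic to a topologically closed substructure of a
power M̃_nˢ for some nonempty set S, if and only if X satisfies axioms (A1)–(A7).
-/

namespace ExpandingBelnap
/-! ### The alter ego `M̃ₙ`

The sorts are `M₀ = {⊤⁰, f⁰, t⁰, ⊥⁰}` and `M_k = {⊤ᵏ, fᵏ, 0ᵏ, tᵏ, 1ᵏ, ⊥ᵏ}` for
`k ∈ [1, n]`.  We realise the combined carrier as the type `MElt n`, where
`MElt.m0 a` is the element `a` of the sort `M₀` and `MElt.mk i v` is the element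
`v` of the sort `M_{i+1}` (for `i : Fin n`). -/

/-- The four-element sort `M₀ = {⊤⁰, f⁰, t⁰, ⊥⁰}`. -/
inductive MZero : Type
  | top | fls | tru | bot
  deriving DecidableEq

instance : Fintype MZero :=
  ⟨{.top, .fls, .tru, .bot}, fun x => by cases x <;> decide⟩

/-- The six-element sort `M_k = {⊤ᵏ, fᵏ, 0ᵏ, tᵏ, 1ᵏ, ⊥ᵏ}`. -/
inductive MSix : Type
  | top | fls | zer | tru | one | bot
  deriving DecidableEq

instance : Fintype MSix :=
  ⟨{.top, .fls, .zer, .tru, .one, .bot}, fun x => by cases x <;> decide⟩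

/-- The combined carrier `M₀ ⊔ M₁ ⊔ ⋯ ⊔ Mₙ` of the alter ego `M̃ₙ`. -/
inductive MElt (n : ℕ) : Type
  | m0 : MZero → MElt n
  | mk : Fin n → MSix → MElt n
  deriving DecidableEq, Fintype

/-- The topology on `M̃ₙ` is discrete. -/
instance (n : ℕ) : TopologicalSpace (MElt n) := ⊥

/-- The sort of an element of `M̃ₙ`. -/
def msort {n : ℕ} : MElt n → Fin (n + 1)
  | .m0 _ => 0
  | .mk i _ => i.succ

/-- The six-to-four-element projection underlying `g_k : M_k → M₀`:
`⊤ᵏ ↦ ⊤⁰`, `⊥ᵏ ↦ ⊥⁰`, `fᵏ, 0ᵏ ↦ f⁰`, `tᵏ, 1ᵏ ↦ t⁰`. -/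
def mproj : MSix → MZero
  | .top => .top
  | .bot => .bot
  | .fls => .fls
  | .zer => .fls
  | .tru => .tru
  | .one => .tru

/-- The combined operation of `M̃ₙ`: it is `g_k` on the sort `M_k` (`k ∈ [1, n]`)
and the identity on the sort `M₀`. -/
def mg {n : ℕ} : MElt n → MElt n
  | .m0 a => .m0 a
  | .mk _ v => .m0 (mproj v)

/-- The relation `≤⁰ = (M₀ × {⊤⁰}) ∪ ({⊥⁰} × M₀) ∪ {(f⁰,f⁰), (t⁰,t⁰)}` on `M₀`. -/
def mr0 : MZero → MZero → Prop := fun a b => b = .top ∨ a = .bot ∨ a = b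

/-- The pattern common to the relations `≤ᵏ` and `≤ʲᵏ` on the six-element sorts:
`{(⊤,⊤), (⊥,⊥), (f,f), (f,0), (0,0), (t,t), (t,1), (1,1)}`. -/
def mr6 : MSix → MSix → Prop :=
  fun v w => v = w ∨ (v = .fls ∧ w = .zer) ∨ (v = .tru ∧ w = .one)

/-- The combined relation of `M̃ₙ`: it is `≤⁰` within the sort `M₀`, `≤ᵏ` within a
sort `M_k` with `k ∈ [1, n]`, the relation `≤ʲᵏ` from `M_j` to `M_k` when
`1 ≤ j < k ≤ n`, and empty between all other pairs of sorts. -/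
def mr {n : ℕ} : MElt n → MElt n → Prop := fun x y =>
  match x, y with
  | .m0 a, .m0 b => mr0 a b
  | .mk i v, .mk j w => i ≤ j ∧ mr6 v w
  | _, _ => False
/-! ### Multi-sorted topological structures in the signature of the alter ego `M̃ₙ`

A multi-sorted topological structure `X = ⟨X₀ ⊔ ⋯ ⊔ Xₙ; {g_k}, {≤ᵏ}, {≤ʲᵏ}, T⟩` is
presented by a single carrier `C` (the disjoint union), a `sort` map `C → Fin (n+1)`
(each sort being clopen, which encodes the disjoint-union topology), a combined
operation `g : C → C` (equal to `g_k` on the sort-`k` part for `k ≥ 1` and to the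
identity on the sort-`0` part), and a combined relation `r : C → C → Prop`
(equal to `≤ᵏ` on pairs within sort `k` and to `≤ʲᵏ` on pairs from sort `j` to
sort `k` for `1 ≤ j < k`, and empty on all other pairs of sorts). -/

/-- `U` is an up-set for the relation `r`. -/
def IsUpset {C : Type} (r : C → C → Prop) (U : Set C) : Prop :=
  ∀ x ∈ U, ∀ y, r x y → y ∈ U

/-- `⟨C; r, T⟩` is a Priestley space: `r` is a partial order and the space is
compact and totally order-disconnected. -/
def IsPriestley (C : Type) [TopologicalSpace C] (r : C → C → Prop) : Prop :=
  (∀ x, r x x) ∧ (∀ x y, r x y → r y x → x = y) ∧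
    (∀ x y z, r x y → r y z → r x z) ∧ CompactSpace C ∧
    ∀ x y, ¬ r x y → ∃ U : Set C, IsClopen U ∧ IsUpset r U ∧ x ∈ U ∧ y ∉ U

/-- `(C, sort, g, r)` presents a multi-sorted topological structure in the signature
of `M̃ₙ`: the sorts are clopen (disjoint-union topology), `g` maps into sort `0` and
restricts to the identity on sort `0`, and the relation only relates pairs within a
sort or from sort `j` to sort `k` where `1 ≤ j < k`. -/
def IsMS {n : ℕ} {C : Type} [TopologicalSpace C]
    (sort : C → Fin (n + 1)) (g : C → C) (r : C → C → Prop) : Prop :=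
  (∀ k, IsClopen {x | sort x = k}) ∧
    (∀ x, sort (g x) = 0) ∧
    (∀ x, sort x = 0 → g x = x) ∧
    (∀ x y, r x y → sort x = sort y ∨ (0 < (sort x).val ∧ (sort x).val < (sort y).val))

/-- (A1): each `g_k : X_k → X₀` is continuous (`k ∈ [1, n]`). -/
def AxA1 {n : ℕ} {C : Type} [TopologicalSpace C]
    (sort : C → Fin (n + 1)) (g : C → C) : Prop :=
  ∀ k : Fin (n + 1), 0 < k.val → Continuous fun x : {x : C // sort x = k} => g x.1

/-- (A2): for `k ∈ [1, n]` and `x, y ∈ X_k`, `x ≤ᵏ y` implies `g_k x = g_k y`. -/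
def AxA2 {n : ℕ} {C : Type}
    (sort : C → Fin (n + 1)) (g : C → C) (r : C → C → Prop) : Prop :=
  ∀ x y, sort x = sort y → 0 < (sort x).val → r x y → g x = g y

/-- (A3): for `1 ≤ j < k`, `x ∈ X_j`, `y ∈ X_k`, `x ≤ʲᵏ y` implies `g_j x = g_k y`. -/
def AxA3 {n : ℕ} {C : Type}
    (sort : C → Fin (n + 1)) (g : C → C) (r : C → C → Prop) : Prop :=
  ∀ x y, 0 < (sort x).val → (sort x).val < (sort y).val → r x y → g x = g y

/-- (A4): for `1 ≤ j < k`, `x, y ∈ X_j`, `u, v ∈ X_k`: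
`x ≤ʲ y`, `y ≤ʲᵏ u`, `u ≤ᵏ v` imply `x ≤ʲᵏ v`. -/
def AxA4 {n : ℕ} {C : Type} (sort : C → Fin (n + 1)) (r : C → C → Prop) : Prop :=
  ∀ x y u v, 0 < (sort x).val → sort x = sort y → (sort y).val < (sort u).val →
    sort u = sort v → r x y → r y u → r u v → r x v

/-- (A5): for `1 ≤ j < k < l`, `x ∈ X_j`, `y ∈ X_k`, `z ∈ X_l`:
`x ≤ʲᵏ y` and `y ≤ᵏˡ z` imply `x ≤ʲˡ z`. -/
def AxA5 {n : ℕ} {C : Type} (sort : C → Fin (n + 1)) (r : C → C → Prop) : Prop :=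
  ∀ x y z, 0 < (sort x).val → (sort x).val < (sort y).val →
    (sort y).val < (sort z).val → r x y → r y z → r x z

/-- (A6): each `⟨X_k; ≤ᵏ, T_k⟩` is a Priestley space (`k ∈ [0, n]`). -/
def AxA6 {n : ℕ} {C : Type} [TopologicalSpace C]
    (sort : C → Fin (n + 1)) (r : C → C → Prop) : Prop :=
  ∀ k : Fin (n + 1), IsPriestley {x : C // sort x = k} fun a b => r a.1 b.1

/-- `U j, …, U k` is a mutually increasing family: each `U l` is a subset of `X_l`,
each `U l` is an up-set of `⟨X_l; ≤ˡ⟩`, and for `max(1,j) ≤ i ≤ l ≤ k`,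
`x ∈ U i`, `y ∈ X_l` and `x ≤ⁱˡ y` imply `y ∈ U l`. -/
def MutInc {n : ℕ} {C : Type} (sort : C → Fin (n + 1)) (r : C → C → Prop)
    (j k : Fin (n + 1)) (U : Fin (n + 1) → Set C) : Prop :=
  (∀ l, j ≤ l → l ≤ k → U l ⊆ {x | sort x = l}) ∧
    ∀ i l, j ≤ i → i ≤ l → l ≤ k → (i = l ∨ 0 < i.val) →
      ∀ x ∈ U i, ∀ y, sort y = l → r x y → y ∈ U l

/-- `U` is a clopen subset of the sort-`l` subspace `⟨X_l; T_l⟩`. -/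
def ClopenSort {n : ℕ} {C : Type} [TopologicalSpace C]
    (sort : C → Fin (n + 1)) (l : Fin (n + 1)) (U : Set C) : Prop :=
  IsClopen {z : {x : C // sort x = l} | z.1 ∈ U}

/-- (A7): for `1 ≤ j < k`, `x ∈ X_j`, `y ∈ X_k` with `x ≰ʲᵏ y`, there is a mutually
increasing family of clopen up-sets `U j, …, U k` with `x ∈ U j` and `y ∉ U k`. -/
def AxA7 {n : ℕ} {C : Type} [TopologicalSpace C]
    (sort : C → Fin (n + 1)) (r : C → C → Prop) : Prop :=
  ∀ j k : Fin (n + 1), 0 < j.val → j < k → ∀ x y, sort x = j → sort y = k → ¬ r x y →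
    ∃ U : Fin (n + 1) → Set C, MutInc sort r j k U ∧
      (∀ l, j ≤ l → l ≤ k → ClopenSort sort l (U l)) ∧ x ∈ U j ∧ y ∉ U k

/-- The conjunction of axioms (A1)–(A7). -/
def AxiomsA {n : ℕ} {C : Type} [TopologicalSpace C]
    (sort : C → Fin (n + 1)) (g : C → C) (r : C → C → Prop) : Prop :=
  AxA1 sort g ∧ AxA2 sort g r ∧ AxA3 sort g r ∧ AxA4 sort r ∧ AxA5 sort r ∧
    AxA6 sort r ∧ AxA7 sort r

/-- `X = (C, sort, g, r)` belongs to `IScP(M̃ₙ)`: there is a nonempty set `S` and a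
map `φ` from `C` into the power `M̃ₙ^S` (whose sort-`k` part is `M_k^S`, with the
structure computed pointwise and the product topology) such that `φ` is a
homeomorphism onto a topologically closed subset, preserves sorts, commutes with
the operations `g_k`, and preserves and reflects the relations; that is, `φ` is an
isomorphism of `X` onto a topologically closed substructure of `M̃ₙ^S`. -/
def InIScP (n : ℕ) (C : Type) [TopologicalSpace C]
    (sort : C → Fin (n + 1)) (g : C → C) (r : C → C → Prop) : Prop :=
  ∃ (S : Type) (_ : Nonempty S) (φ : C → S → MElt n),
    Topology.IsClosedEmbedding φ ∧
      (∀ x s, msort (φ x s) = sort x) ∧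
      (∀ x s, φ (g x) s = mg (φ x s)) ∧
      (∀ x y, r x y ↔ ∀ s, mr (φ x s) (φ y s))


/-! ### Auxiliary lemmas -/

section Aux

variable {n : ℕ}

instance : DiscreteTopology (MElt n) := ⟨rfl⟩

instance : ∀ a b, Decidable (mr0 a b) := fun a b => by unfold mr0; infer_instance
instance : ∀ v w, Decidable (mr6 v w) := fun v w => by unfold mr6; infer_instance

lemma mr0_refl (a : MZero) : mr0 a a := Or.inr (Or.inr rfl)
lemma mr6_refl (v : MSix) : mr6 v v := Or.inl rfl
lemma mr0_trans : ∀ a b c, mr0 a b → mr0 b c → mr0 a c := by decide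
lemma mr0_antisymm : ∀ a b, mr0 a b → mr0 b a → a = b := by decide
lemma mr6_trans : ∀ v w u, mr6 v w → mr6 w u → mr6 v u := by decide
lemma mr6_antisymm : ∀ v w, mr6 v w → mr6 w v → v = w := by decide
lemma mproj_mr6 : ∀ v w, mr6 v w → mproj v = mproj w := by decide

lemma mr_m0_iff {a b : MZero} : mr (n := n) (.m0 a) (.m0 b) ↔ mr0 a b := Iff.rfl
lemma mr_mk_iff {i j : Fin n} {v w : MSix} :
    mr (.mk i v) (.mk j w) ↔ i ≤ j ∧ mr6 v w := Iff.rfl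
lemma not_mr_m0_mk {a : MZero} {i : Fin n} {v : MSix} : ¬ mr (.m0 a) (.mk i v) := fun h => h
lemma not_mr_mk_m0 {a : MZero} {i : Fin n} {v : MSix} : ¬ mr (.mk i v) (.m0 a) := fun h => h

lemma mr_refl (x : MElt n) : mr x x := by
  cases x with
  | m0 a => exact mr0_refl a
  | mk i v => exact ⟨le_refl i, mr6_refl v⟩

lemma mr_trans {x y z : MElt n} (h1 : mr x y) (h2 : mr y z) : mr x z := by
  cases x with
  | m0 a =>
    cases y with
    | m0 b =>
      cases z with
      | m0 c => exact mr0_trans a b c h1 h2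
      | mk j w => exact absurd h2 not_mr_m0_mk
    | mk j w => exact absurd h1 not_mr_m0_mk
  | mk i v =>
    cases y with
    | m0 b => exact absurd h1 not_mr_mk_m0
    | mk j w =>
      cases z with
      | m0 c => exact absurd h2 not_mr_mk_m0
      | mk l u => exact ⟨le_trans h1.1 h2.1, mr6_trans v w u h1.2 h2.2⟩

lemma mr_antisymm {x y : MElt n} (h1 : mr x y) (h2 : mr y x) : x = y := by
  cases x with
  | m0 a =>
    cases y with
    | m0 b => exact congrArg MElt.m0 (mr0_antisymm a b h1 h2)
    | mk j w => exact absurd h1 not_mr_m0_mk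
  | mk i v =>
    cases y with
    | m0 b => exact absurd h1 not_mr_mk_m0
    | mk j w =>
      rw [le_antisymm h1.1 h2.1, mr6_antisymm v w h1.2 h2.2]

lemma msort_m0 (a : MZero) : msort (n := n) (.m0 a) = 0 := rfl
lemma msort_mk (i : Fin n) (v : MSix) : msort (.mk i v) = i.succ := rfl

end Aux

/-! ### Forward direction -/

lemma fwd {n : ℕ} {C : Type} [TopologicalSpace C] {sort : C → Fin (n + 1)}
    {g : C → C} {r : C → C → Prop} (hMS : IsMS sort g r)
    (h : InIScP n C sort g r) : AxiomsA sort g r := by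
  obtain ⟨S, hS, φ, hemb, hsort, hgφ, hriff⟩ := h
  obtain ⟨hclopen, hg0, hgid, hrs⟩ := hMS
  have hφc : Continuous φ := hemb.continuous
  have hinj : Function.Injective φ := hemb.isEmbedding.injective
  have hCc : CompactSpace C := hemb.compactSpace
  have hgc : Continuous g := by
    rw [hemb.isEmbedding.continuous_iff]
    have : φ ∘ g = fun x => fun s => mg (φ x s) := funext fun x => funext fun s => hgφ x s
    rw [this]
    refine continuous_pi fun s => ?_
    have hmgc : Continuous (mg : MElt n → MElt n) := continuous_of_discreteTopology
    exact hmgc.comp ((continuous_apply s).comp hφc)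
  have key : ∀ x, 0 < (sort x).val → ∀ y s, mr (φ x s) (φ y s) → mg (φ x s) = mg (φ y s) := by
    intro x hx y s hmr
    cases hx1 : φ x s with
    | m0 a =>
      have h0 := hsort x s
      rw [hx1, msort_m0] at h0
      rw [← h0] at hx
      simp at hx
    | mk i v =>
      cases hy1 : φ y s with
      | m0 b => rw [hx1, hy1] at hmr; exact absurd hmr not_mr_mk_m0
      | mk j w =>
        rw [hx1, hy1] at hmr
        show mg (MElt.mk i v) = mg (MElt.mk j w)
        simp only [mg]
        rw [mproj_mr6 v w hmr.2]
  have keyg : ∀ x y, 0 < (sort x).val → r x y → g x = g y := by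
    intro x y hx hr
    apply hinj
    funext s
    rw [hgφ, hgφ]
    exact key x hx y s ((hriff x y).mp hr s)
  refine ⟨?_, ?_, ?_, ?_, ?_, ?_, ?_⟩
  · -- A1
    intro k _
    exact hgc.comp continuous_subtype_val
  · -- A2
    intro x y _ hpos hr
    exact keyg x y hpos hr
  · -- A3
    intro x y hpos _ hr
    exact keyg x y hpos hr
  · -- A4
    intro x y u v _ _ _ _ h1 h2 h3
    exact (hriff x v).mpr fun s =>
      mr_trans (mr_trans ((hriff x y).mp h1 s) ((hriff y u).mp h2 s)) ((hriff u v).mp h3 s)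
  · -- A5
    intro x y z _ _ _ h1 h2
    exact (hriff x z).mpr fun s => mr_trans ((hriff x y).mp h1 s) ((hriff y z).mp h2 s)
  · -- A6
    intro k
    refine ⟨fun a => (hriff _ _).mpr fun s => mr_refl _,
      fun a b h1 h2 => Subtype.ext (hinj (funext fun s =>
        mr_antisymm ((hriff _ _).mp h1 s) ((hriff _ _).mp h2 s))),
      fun a b c h1 h2 => (hriff _ _).mpr fun s =>
        mr_trans ((hriff _ _).mp h1 s) ((hriff _ _).mp h2 s),
      isCompact_iff_compactSpace.mp ((hclopen k).isClosed.isCompact), ?_⟩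
    intro a b hab
    have : ¬ ∀ s, mr (φ a.1 s) (φ b.1 s) := fun hh => hab ((hriff _ _).mpr hh)
    obtain ⟨s, hs⟩ := not_forall.mp this
    refine ⟨{z | mr (φ a.1 s) (φ z.1 s)}, ?_, ?_, mr_refl _, hs⟩
    · have heq : {z : {x : C // sort x = k} | mr (φ a.1 s) (φ z.1 s)} =
          (fun z : {x : C // sort x = k} => φ z.1 s) ⁻¹' {w | mr (φ a.1 s) w} := rfl
      rw [heq]
      exact (isClopen_discrete _).preimage
        ((continuous_apply s).comp (hφc.comp continuous_subtype_val))
    · exact fun z hz z' hzz' => mr_trans hz ((hriff _ _).mp hzz' s)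
  · -- A7
    intro j k hj hjk x y hx hy hnr
    have : ¬ ∀ s, mr (φ x s) (φ y s) := fun hh => hnr ((hriff _ _).mpr hh)
    obtain ⟨s, hs⟩ := not_forall.mp this
    refine ⟨fun l => {z | sort z = l ∧ mr (φ x s) (φ z s)}, ⟨?_, ?_⟩, ?_, ⟨hx, mr_refl _⟩,
      fun hh => hs hh.2⟩
    · exact fun l _ _ z hz => hz.1
    · intro i l _ _ _ _ z hz z' hz' hr'
      exact ⟨hz', mr_trans hz.2 ((hriff _ _).mp hr' s)⟩
    · intro l _ _
      have heq : {z : {x : C // sort x = l} | z.1 ∈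
            {z | sort z = l ∧ mr (φ x s) (φ z s)}} =
          (fun z : {x : C // sort x = l} => φ z.1 s) ⁻¹' {w | mr (φ x s) w} :=
        Set.ext fun z => ⟨fun hh => hh.2, fun hh => ⟨z.2, hh⟩⟩
      unfold ClopenSort
      rw [heq]
      exact (isClopen_discrete _).preimage
        ((continuous_apply s).comp (hφc.comp continuous_subtype_val))

/-! ### Backward direction : morphisms -/

/-- A (continuous structure-preserving) morphism from `X` to the alter ego. -/
def Mor {n : ℕ} {C : Type} [TopologicalSpace C] (sort : C → Fin (n + 1)) (g : C → C)
    (r : C → C → Prop) (α : C → MElt n) : Prop :=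
  Continuous α ∧ (∀ x, msort (α x) = sort x) ∧ (∀ x, α (g x) = mg (α x)) ∧
    ∀ x y, r x y → mr (α x) (α y)

/-- The index in `Fin n` corresponding to a nonzero sort in `Fin (n+1)`. -/
def idx {n : ℕ} (hn : 1 ≤ n) (k : Fin (n + 1)) : Fin n := ⟨k.val - 1, by omega⟩

lemma idx_succ {n : ℕ} (hn : 1 ≤ n) {k : Fin (n + 1)} (hk : k ≠ 0) : (idx hn k).succ = k := by
  have : k.val ≠ 0 := fun h => hk (Fin.ext h)
  apply Fin.ext
  simp only [Fin.val_succ, idx]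
  omega

lemma idx_mono {n : ℕ} (hn : 1 ≤ n) {k l : Fin (n + 1)} (h : k ≤ l) : idx hn k ≤ idx hn l := by
  rw [Fin.le_def] at h ⊢
  simp only [idx]
  omega

lemma isClopen_val_image {C : Type} [TopologicalSpace C] {A : Set C} (hA : IsClopen A)
    {V : Set A} (hV : IsClopen V) : IsClopen (Subtype.val '' V) :=
  ⟨hA.isClosed.isClosedEmbedding_subtypeVal.isClosedMap _ hV.isClosed,
   hA.isOpen.isOpenMap_subtype_val _ hV.isOpen⟩

lemma cont_sortBool {n : ℕ} {C : Type} [TopologicalSpace C] {sort : C → Fin (n + 1)}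
    (hclopen : ∀ k, IsClopen {x | sort x = k}) {P : Set C} (hP : IsClopen P)
    [DecidablePred (· ∈ P)] (F : Fin (n + 1) → Bool → MElt n) :
    Continuous fun z => F (sort z) (decide (z ∈ P)) := by
  rw [continuous_discrete_rng]
  intro w
  have heq : (fun z => F (sort z) (decide (z ∈ P))) ⁻¹' {w} =
      ⋃ k, ⋃ b, ⋃ (_ : F k b = w), ({x | sort x = k} ∩ {z | decide (z ∈ P) = b}) := by
    ext z
    simp only [Set.mem_preimage, Set.mem_singleton_iff, Set.mem_iUnion, Set.mem_inter_iff,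
      Set.mem_setOf_eq]
    constructor
    · intro h; exact ⟨sort z, decide (z ∈ P), h, rfl, rfl⟩
    · rintro ⟨k, b, hw, h1, h2⟩
      rw [h1, h2]; exact hw
  rw [heq]
  refine isOpen_iUnion fun k => isOpen_iUnion fun b => isOpen_iUnion fun _ =>
    (hclopen k).isOpen.inter ?_
  cases b with
  | false =>
    have : {z : C | decide (z ∈ P) = false} = Pᶜ := by ext z; simp
    rw [this]; exact hP.compl.isOpen
  | true =>
    have : {z : C | decide (z ∈ P) = true} = P := by ext z; simp
    rw [this]; exact hP.isOpen

lemma g_cont {n : ℕ} {C : Type} [TopologicalSpace C] {sort : C → Fin (n + 1)}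
    {g : C → C} {r : C → C → Prop} (hMS : IsMS sort g r) (ha1 : AxA1 sort g) :
    Continuous g := by
  obtain ⟨hclopen, hg0, hgid, hrs⟩ := hMS
  rw [continuous_iff_continuousAt]
  intro x
  have hmem : {z | sort z = sort x} ∈ nhds x := (hclopen (sort x)).isOpen.mem_nhds rfl
  apply ContinuousOn.continuousAt ?_ hmem
  rw [continuousOn_iff_continuous_restrict]
  by_cases h : sort x = 0
  · have heq : Set.domRestrict {z | sort z = sort x} g = fun z => z.1 :=
      funext fun z => hgid z.1 (h ▸ z.2)
    rw [heq]
    exact continuous_subtype_val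
  · have hpos : 0 < (sort x).val := Nat.pos_of_ne_zero fun hh => h (Fin.ext hh)
    exact ha1 (sort x) hpos

lemma mor_top {n : ℕ} {C : Type} [TopologicalSpace C] {sort : C → Fin (n + 1)}
    {g : C → C} {r : C → C → Prop} (hn : 1 ≤ n) (hMS : IsMS sort g r) :
    ∃ α : C → MElt n, Mor sort g r α ∧
      ∀ z, α z = if sort z = 0 then MElt.m0 .top else .mk (idx hn (sort z)) .top := by
  classical
  obtain ⟨hclopen, hg0, hgid, hrs⟩ := hMS
  set F : Fin (n + 1) → Bool → MElt n := fun k _ =>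
    if k = 0 then .m0 .top else .mk (idx hn k) .top with hF
  refine ⟨fun z => F (sort z) (decide (z ∈ (Set.univ : Set C))), ?_, ?_⟩
  case refine_2 =>
    intro z
    show F (sort z) (decide (z ∈ (Set.univ : Set C))) = _
    by_cases h : sort z = 0 <;> simp [hF, h]
  refine ⟨?_, ?_, ?_, ?_⟩
  · exact cont_sortBool hclopen isClopen_univ F
  · intro x
    by_cases h : sort x = 0
    · simp [hF, h, msort_m0]
    · simp [hF, h, msort_mk, idx_succ hn h]
  · intro x
    have h0 : sort (g x) = 0 := hg0 x
    by_cases h : sort x = 0 <;> simp [hF, h, h0, mg, mproj]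
  · intro x y hr
    have hle : sort x ≤ sort y := by
      rcases hrs x y hr with h | h
      · exact le_of_eq h
      · exact le_of_lt (Fin.lt_def.mpr h.2)
    by_cases h : sort x = 0
    · have hy0 : sort y = 0 := by
        rcases hrs x y hr with hh | hh
        · rw [← hh, h]
        · exact absurd hh.1 (by rw [h]; simp)
      simp only [hF, h, hy0, if_pos rfl]
      exact mr0_refl _
    · have hy : sort y ≠ 0 := by
        intro hy
        rw [hy, Fin.le_zero_iff] at hle
        exact h hle
      simp only [hF, if_neg h, if_neg hy]
      exact ⟨idx_mono hn hle, mr6_refl _⟩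

lemma mor_TB {n : ℕ} {C : Type} [TopologicalSpace C] {sort : C → Fin (n + 1)}
    {g : C → C} {r : C → C → Prop} (hn : 1 ≤ n) (hMS : IsMS sort g r)
    (hgc : Continuous g) (ha2 : AxA2 sort g r) (ha3 : AxA3 sort g r)
    {U : Set C} (hU0 : U ⊆ {z | sort z = 0}) (hUc : IsClopen U)
    (hUup : ∀ z ∈ U, ∀ z', r z z' → z' ∈ U) :
    ∃ α : C → MElt n, Mor sort g r α ∧
      (∀ z, g z ∈ U →
        α z = if sort z = 0 then MElt.m0 .top else .mk (idx hn (sort z)) .top) ∧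
      (∀ z, g z ∉ U →
        α z = if sort z = 0 then MElt.m0 .bot else .mk (idx hn (sort z)) .bot) := by
  classical
  obtain ⟨hclopen, hg0, hgid, hrs⟩ := hMS
  set F : Fin (n + 1) → Bool → MElt n := fun k b =>
    if k = 0 then .m0 (if b then .top else .bot)
    else .mk (idx hn k) (if b then .top else .bot) with hF
  refine ⟨fun z => F (sort z) (decide (z ∈ g ⁻¹' U)), ⟨?_, ?_, ?_, ?_⟩, ?_, ?_⟩
  · exact cont_sortBool hclopen (hUc.preimage hgc) F
  · intro x
    by_cases h : sort x = 0
    · simp only [hF, h, if_pos rfl]; rfl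
    · simp only [hF, if_neg h]; rw [msort_mk, idx_succ hn h]
  · intro x
    have h0 : sort (g x) = 0 := hg0 x
    have hgg : g (g x) = g x := hgid _ h0
    show F (sort (g x)) (decide (g (g x) ∈ U)) = mg (F (sort x) (decide (g x ∈ U)))
    rw [h0, hgg]
    by_cases h : sort x = 0 <;> by_cases hu : g x ∈ U <;>
      simp [hF, h, hu, mg, mproj]
  · intro x y hr
    show mr (F (sort x) (decide (g x ∈ U))) (F (sort y) (decide (g y ∈ U)))
    rcases hrs x y hr with heq | ⟨h1, h2⟩
    · by_cases h : sort x = 0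
      · have hy0 : sort y = 0 := heq ▸ h
        have hgx : g x = x := hgid x h
        have hgy : g y = y := hgid y hy0
        rw [hgx, hgy]
        by_cases hxU : x ∈ U
        · have hyU : y ∈ U := hUup x hxU y hr
          simp only [hF, h, hy0, if_pos rfl, decide_eq_true hxU, decide_eq_true hyU]
          exact mr0_refl _
        · by_cases hyU : y ∈ U <;>
            simp only [hF, h, hy0, if_pos rfl, decide_eq_false hxU] <;>
            [rw [decide_eq_true hyU]; rw [decide_eq_false hyU]]
          · exact Or.inl rfl
          · exact mr0_refl _
      · have hy : sort y ≠ 0 := heq ▸ h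
        have hpos : 0 < (sort x).val := Nat.pos_of_ne_zero fun hh => h (Fin.ext hh)
        have hgeq : g x = g y := ha2 x y heq hpos hr
        rw [← hgeq]
        by_cases hu : g x ∈ U <;> simp only [hF, if_neg h, if_neg hy] <;>
          exact ⟨idx_mono hn (le_of_eq heq), mr6_refl _⟩
    · have hx : sort x ≠ 0 := fun hh => by rw [hh] at h1; simp at h1
      have hy : sort y ≠ 0 := fun hh => by rw [hh] at h2; simp at h2
      have hgeq : g x = g y := ha3 x y h1 h2 hr
      rw [← hgeq]
      simp only [hF, if_neg hx, if_neg hy]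
      exact ⟨idx_mono hn (le_of_lt (Fin.lt_def.mpr h2)), mr6_refl _⟩
  · intro z hz
    show F (sort z) (decide (g z ∈ U)) = _
    rw [decide_eq_true hz]
    by_cases h : sort z = 0 <;> simp [hF, h]
  · intro z hz
    show F (sort z) (decide (g z ∈ U)) = _
    rw [decide_eq_false hz]
    by_cases h : sort z = 0 <;> simp [hF, h]

lemma mor_F {n : ℕ} {C : Type} [TopologicalSpace C] {sort : C → Fin (n + 1)}
    {g : C → C} {r : C → C → Prop} (hn : 1 ≤ n) (hMS : IsMS sort g r)
    {W : Fin (n + 1) → Set C} (hWsub : ∀ l, W l ⊆ {z | sort z = l})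
    (hWc : ∀ l, IsClopen (W l))
    (hWinc : ∀ x y, r x y → x ∈ W (sort x) → y ∈ W (sort y)) :
    ∃ α : C → MElt n, Mor sort g r α ∧
      (∀ z, sort z ≠ 0 → z ∈ W (sort z) → α z = .mk (idx hn (sort z)) .zer) ∧
      (∀ z, sort z ≠ 0 → z ∉ W (sort z) → α z = .mk (idx hn (sort z)) .fls) := by
  classical
  obtain ⟨hclopen, hg0, hgid, hrs⟩ := hMS
  have hmemU : ∀ z : C, z ∈ (⋃ l, W l) ↔ z ∈ W (sort z) := by
    intro z
    constructor
    · intro h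
      obtain ⟨l, hl⟩ := Set.mem_iUnion.mp h
      rwa [show sort z = l from hWsub l hl]
    · exact fun h => Set.mem_iUnion.mpr ⟨_, h⟩
  set F : Fin (n + 1) → Bool → MElt n := fun k b =>
    if k = 0 then .m0 .fls else .mk (idx hn k) (if b then .zer else .fls) with hF
  have hUc : IsClopen (⋃ l, W l) :=
    ⟨isClosed_iUnion_of_finite fun l => (hWc l).isClosed,
     isOpen_iUnion fun l => (hWc l).isOpen⟩
  refine ⟨fun z => F (sort z) (decide (z ∈ ⋃ l, W l)), ⟨?_, ?_, ?_, ?_⟩, ?_, ?_⟩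
  · exact cont_sortBool hclopen hUc F
  · intro x
    by_cases h : sort x = 0
    · simp only [hF, h, if_pos rfl]; rfl
    · simp only [hF, if_neg h]; rw [msort_mk, idx_succ hn h]
  · intro x
    have h0 : sort (g x) = 0 := hg0 x
    have hf0 : ∀ b, F 0 b = .m0 .fls := fun b => by simp [hF]
    show F (sort (g x)) _ = mg (F (sort x) _)
    rw [h0, hf0]
    by_cases h : sort x = 0
    · rw [h, hf0]; rfl
    · simp only [hF, if_neg h]
      cases hb : decide (x ∈ ⋃ l, W l) <;> simp [mg, mproj]
  · intro x y hr
    show mr (F (sort x) (decide (x ∈ ⋃ l, W l))) (F (sort y) (decide (y ∈ ⋃ l, W l)))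
    have hinc : x ∈ W (sort x) → y ∈ W (sort y) := hWinc x y hr
    have hle : sort x ≤ sort y := by
      rcases hrs x y hr with h | h
      · exact le_of_eq h
      · exact le_of_lt (Fin.lt_def.mpr h.2)
    by_cases h : sort x = 0
    · have hy0 : sort y = 0 := by
        rcases hrs x y hr with hh | hh
        · rw [← hh, h]
        · exact absurd hh.1 (by rw [h]; simp)
      simp only [hF, h, hy0, if_pos rfl]
      exact mr0_refl _
    · have hy : sort y ≠ 0 := by
        intro hy
        rw [hy, Fin.le_zero_iff] at hle
        exact h hle
      simp only [hF, if_neg h, if_neg hy]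
      refine ⟨idx_mono hn hle, ?_⟩
      by_cases hx : x ∈ W (sort x)
      · have hyW := hinc hx
        rw [decide_eq_true ((hmemU x).mpr hx), decide_eq_true ((hmemU y).mpr hyW)]
        exact mr6_refl _
      · rw [decide_eq_false (fun hh => hx ((hmemU x).mp hh))]
        by_cases hyW : y ∈ W (sort y)
        · rw [decide_eq_true ((hmemU y).mpr hyW)]
          exact Or.inr (Or.inl ⟨rfl, rfl⟩)
        · rw [decide_eq_false (fun hh => hyW ((hmemU y).mp hh))]
          exact mr6_refl _
  · intro z hz hzW
    show F (sort z) _ = _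
    rw [decide_eq_true ((hmemU z).mpr hzW)]
    simp [hF, hz]
  · intro z hz hzW
    show F (sort z) _ = _
    rw [decide_eq_false (fun hh => hzW ((hmemU z).mp hh))]
    simp [hF, hz]

/-! ### Backward direction : separation -/

lemma sep {n : ℕ} {C : Type} [TopologicalSpace C] {sort : C → Fin (n + 1)}
    {g : C → C} {r : C → C → Prop} (hn : 1 ≤ n) (hMS : IsMS sort g r)
    (hA : AxiomsA sort g r) :
    ∀ x y, ¬ r x y → ∃ α : C → MElt n, Mor sort g r α ∧ ¬ mr (α x) (α y) := by
  classical
  obtain ⟨a1, a2, a3, a4, a5, a6, a7⟩ := hA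
  have hgc : Continuous g := g_cont hMS a1
  obtain ⟨hclopen, hg0, hgid, hrs⟩ := id hMS
  intro x y hnr
  by_cases hss : sort x = sort y
  · by_cases h0 : sort x = 0
    · -- Case A : both in sort 0
      have hx0 : sort x = 0 := h0
      have hy0 : sort y = 0 := hss ▸ h0
      obtain ⟨U', hU'c, hU'up, hxU, hyU⟩ :=
        (a6 0).2.2.2.2 ⟨x, hx0⟩ ⟨y, hy0⟩ hnr
      set U : Set C := Subtype.val '' U' with hU
      have hU0 : U ⊆ {z | sort z = 0} := by rintro _ ⟨z, hz, rfl⟩; exact z.2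
      have hUc : IsClopen U := isClopen_val_image (hclopen 0) hU'c
      have hUup : ∀ z ∈ U, ∀ z', r z z' → z' ∈ U := by
        rintro _ ⟨z, hz, rfl⟩ z' hr'
        have hz'0 : sort z' = 0 := by
          rcases hrs z.1 z' hr' with hh | hh
          · rw [← hh]; exact z.2
          · exact absurd hh.1 (by rw [z.2]; simp)
        exact ⟨⟨z', hz'0⟩, hU'up z hz ⟨z', hz'0⟩ hr', rfl⟩
      obtain ⟨α, hmor, hT, hB⟩ := mor_TB hn hMS hgc a2 a3 hU0 hUc hUup
      have hax : α x = .m0 .top := by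
        rw [hT x (by rw [hgid x hx0]; exact ⟨⟨x, hx0⟩, hxU, rfl⟩), if_pos hx0]
      have hay : α y = .m0 .bot := by
        have hyn : g y ∉ U := by
          rw [hgid y hy0]
          rintro ⟨z, hz, hzv⟩
          exact hyU (by rwa [show z = ⟨y, hy0⟩ from Subtype.ext hzv] at hz)
        rw [hB y hyn, if_pos hy0]
      refine ⟨α, hmor, ?_⟩
      rw [hax, hay, mr_m0_iff]
      decide
    · -- Case B : both in sort k ≠ 0
      set k := sort x with hk
      have hy0 : sort y = k := hss.symm
      obtain ⟨U', hU'c, hU'up, hxU, hyU⟩ :=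
        (a6 k).2.2.2.2 ⟨x, rfl⟩ ⟨y, hy0⟩ hnr
      set U : Set C := Subtype.val '' U' with hU
      have hUsub : U ⊆ {z | sort z = k} := by rintro _ ⟨z, hz, rfl⟩; exact z.2
      have hUc : IsClopen U := isClopen_val_image (hclopen k) hU'c
      set W : Fin (n + 1) → Set C := fun l =>
        if l = k then U else if k < l then {z | sort z = l} else ∅ with hW
      have hWsub : ∀ l, W l ⊆ {z | sort z = l} := by
        intro l z hz
        simp only [hW] at hz
        split at hz
        · next hh => rw [hh]; exact hUsub hz
        · split at hz
          · exact hz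
          · exact absurd hz (Set.notMem_empty z)
      have hWc : ∀ l, IsClopen (W l) := by
        intro l
        simp only [hW]
        split
        · exact hUc
        · split
          · exact hclopen l
          · exact isClopen_empty
      have hWinc : ∀ z z', r z z' → z ∈ W (sort z) → z' ∈ W (sort z') := by
        intro z z' hr' hz
        have hle : sort z ≤ sort z' := by
          rcases hrs z z' hr' with hh | hh
          · exact le_of_eq hh
          · exact le_of_lt (Fin.lt_def.mpr hh.2)
        simp only [hW] at hz ⊢
        split at hz
        · next hh =>
          -- sort z = k, z ∈ U
          rcases eq_or_lt_of_le hle with heq | hlt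
          · rw [← heq, hh]
            rw [if_pos rfl]
            obtain ⟨w, hw, hwv⟩ := hz
            have hz'k : sort z' = k := by rw [← heq, hh]
            refine ⟨⟨z', hz'k⟩, ?_, rfl⟩
            refine hU'up w hw ⟨z', hz'k⟩ ?_
            show r w.1 z'
            rw [hwv]
            exact hr'
          · have hklt : k < sort z' := hh ▸ hlt
            rw [if_neg (by intro hh2; rw [hh2] at hklt; exact lt_irrefl _ hklt),
              if_pos hklt]
            exact rfl
        · split at hz
          · next hh1 hh2 =>
            -- k < sort z
            have hklt : k < sort z' := lt_of_lt_of_le hh2 hle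
            rw [if_neg (by intro hh3; rw [hh3] at hklt; exact lt_irrefl _ hklt),
              if_pos hklt]
            exact rfl
          · exact absurd hz (Set.notMem_empty z)
      obtain ⟨α, hmor, hZ, hFl⟩ := mor_F hn hMS hWsub hWc hWinc
      have hxW : x ∈ W (sort x) := by
        simp only [hW, ← hk, if_pos rfl]
        exact ⟨⟨x, rfl⟩, hxU, rfl⟩
      have hyW : y ∉ W (sort y) := by
        simp only [hW, hy0, if_pos rfl]
        rintro ⟨z, hz, hzv⟩
        exact hyU (by rwa [show z = ⟨y, hy0⟩ from Subtype.ext hzv] at hz)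
      refine ⟨α, hmor, ?_⟩
      rw [hZ x h0 hxW, hFl y (hy0 ▸ h0) hyW, mr_mk_iff]
      rintro ⟨-, h6⟩
      exact (by decide : ¬ mr6 .zer .fls) h6
  · by_cases hcross : 0 < (sort x).val ∧ sort x < sort y
    · -- Case C : cross-sort via A7
      obtain ⟨hxpos, hxy⟩ := hcross
      obtain ⟨V, ⟨hVsub, hVinc⟩, hVclop, hxV, hyV⟩ :=
        a7 (sort x) (sort y) hxpos hxy x y rfl rfl hnr
      set W : Fin (n + 1) → Set C := fun l =>
        if sort x ≤ l ∧ l ≤ sort y then V l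
        else if sort y < l then {z | sort z = l} else ∅ with hW
      have hWsub : ∀ l, W l ⊆ {z | sort z = l} := by
        intro l z hz
        simp only [hW] at hz
        split at hz
        · next hh => exact hVsub l hh.1 hh.2 hz
        · split at hz
          · exact hz
          · exact absurd hz (Set.notMem_empty z)
      have hWc : ∀ l, IsClopen (W l) := by
        intro l
        simp only [hW]
        split
        · next hh =>
          have heq : V l = Subtype.val '' {z : {w : C // sort w = l} | z.1 ∈ V l} := by
            ext w
            constructor
            · intro hw; exact ⟨⟨w, hVsub l hh.1 hh.2 hw⟩, hw, rfl⟩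
            · rintro ⟨z, hz, rfl⟩; exact hz
          rw [heq]
          exact isClopen_val_image (hclopen l) (hVclop l hh.1 hh.2)
        · split
          · exact hclopen l
          · exact isClopen_empty
      have hWinc : ∀ z z', r z z' → z ∈ W (sort z) → z' ∈ W (sort z') := by
        intro z z' hr' hz
        have hle : sort z ≤ sort z' := by
          rcases hrs z z' hr' with hh | hh
          · exact le_of_eq hh
          · exact le_of_lt (Fin.lt_def.mpr hh.2)
        simp only [hW] at hz ⊢
        split at hz
        · next hh =>
          by_cases hz'le : sort z' ≤ sort y
          · rw [if_pos ⟨le_trans hh.1 hle, hz'le⟩]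
            refine hVinc (sort z) (sort z') hh.1 hle hz'le
              (Or.inr (lt_of_lt_of_le (Nat.pos_of_ne_zero ?_) (Fin.le_def.mp hh.1))) z hz z' rfl hr'
            exact fun hh2 => by rw [hh2] at hxpos; simp at hxpos
          · have hgt : sort y < sort z' := lt_of_not_ge hz'le
            rw [if_neg (fun hh2 => hz'le hh2.2), if_pos hgt]
            exact rfl
        · split at hz
          · next hh1 hh2 =>
            have hgt : sort y < sort z' := lt_of_lt_of_le hh2 hle
            rw [if_neg (fun hh3 => (not_le_of_gt hgt) hh3.2), if_pos hgt]
            exact rfl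
          · exact absurd hz (Set.notMem_empty z)
      obtain ⟨α, hmor, hZ, hFl⟩ := mor_F hn hMS hWsub hWc hWinc
      have hx0 : sort x ≠ 0 := fun hh => by rw [hh] at hxpos; simp at hxpos
      have hy0 : sort y ≠ 0 := by
        intro hh
        have := Fin.lt_def.mp hxy
        rw [hh] at this
        simp at this
      have hxW : x ∈ W (sort x) := by
        have hc : sort x ≤ sort x ∧ sort x ≤ sort y := ⟨le_refl _, le_of_lt hxy⟩
        simp only [hW, if_pos hc]
        exact hxV
      have hyW : y ∉ W (sort y) := by
        have hc : sort x ≤ sort y ∧ sort y ≤ sort y := ⟨le_of_lt hxy, le_refl _⟩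
        simp only [hW, if_pos hc]
        exact hyV
      refine ⟨α, hmor, ?_⟩
      rw [hZ x hx0 hxW, hFl y hy0 hyW, mr_mk_iff]
      rintro ⟨-, h6⟩
      exact (by decide : ¬ mr6 .zer .fls) h6
    · -- Case D : incompatible sorts
      obtain ⟨α, hmor, hval⟩ := mor_top (r := r) hn hMS
      refine ⟨α, hmor, ?_⟩
      rw [hval x, hval y]
      by_cases hx0 : sort x = 0
      · have hy0 : sort y ≠ 0 := fun hh => hss (hx0.trans hh.symm)
        rw [if_pos hx0, if_neg hy0]
        exact not_mr_m0_mk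
      · by_cases hy0 : sort y = 0
        · rw [if_neg hx0, if_pos hy0]
          exact not_mr_mk_m0
        · rw [if_neg hx0, if_neg hy0, mr_mk_iff]
          rintro ⟨hle, -⟩
          rw [Fin.le_def] at hle
          simp only [idx] at hle
          have h1 : (sort x).val ≠ 0 := fun hh => hx0 (Fin.ext hh)
          have h2 : (sort y).val ≠ 0 := fun hh => hy0 (Fin.ext hh)
          have h3 : (sort x).val ≠ (sort y).val := fun hh => hss (Fin.ext hh)
          have h4 : ¬ ((sort x).val < (sort y).val) :=
            fun hh => hcross ⟨Nat.pos_of_ne_zero h1, Fin.lt_def.mpr hh⟩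
          omega

/-! ### Backward direction : assembly -/

lemma bwd {n : ℕ} {C : Type} [TopologicalSpace C] {sort : C → Fin (n + 1)}
    {g : C → C} {r : C → C → Prop} (hn : 1 ≤ n) (hMS : IsMS sort g r)
    (hA : AxiomsA sort g r) : InIScP n C sort g r := by
  classical
  obtain ⟨a1, a2, a3, a4, a5, a6, a7⟩ := id hA
  have hgc : Continuous g := g_cont hMS a1
  have hCc : CompactSpace C := by
    refine ⟨?_⟩
    have huniv : (Set.univ : Set C) = ⋃ k, {x | sort x = k} := by
      ext x
      simp only [Set.mem_univ, Set.mem_iUnion, Set.mem_setOf_eq, true_iff]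
      exact ⟨sort x, rfl⟩
    rw [huniv]
    exact isCompact_iUnion fun k => isCompact_iff_compactSpace.mpr ((a6 k).2.2.2.1)
  obtain ⟨α₀, hα₀, -⟩ := mor_top (r := r) hn hMS
  refine ⟨{α : C → MElt n // Mor sort g r α}, ⟨⟨α₀, hα₀⟩⟩, fun x α => α.1 x, ?_,
    fun x α => α.2.2.1 x, fun x α => α.2.2.2.1 x, ?_⟩
  · have hc : Continuous (fun x (α : {α : C → MElt n // Mor sort g r α}) => α.1 x) :=
      continuous_pi fun α => α.2.1
    apply hc.isClosedEmbedding
    intro x y hxy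
    have key : ∀ a b : C, (∀ β : {α : C → MElt n // Mor sort g r α}, β.1 a = β.1 b) →
        r a b := by
      intro a b h
      by_contra hnr
      obtain ⟨β, hm, hsep⟩ := sep hn hMS hA a b hnr
      have heq : β a = β b := h ⟨β, hm⟩
      exact hsep (by rw [heq]; exact mr_refl _)
    have h1 : r x y := key x y fun β => congrFun hxy β
    have h2 : r y x := key y x fun β => (congrFun hxy β).symm
    have hss : sort x = sort y := by
      rcases hMS.2.2.2 x y h1 with h | h
      · exact h
      · rcases hMS.2.2.2 y x h2 with h' | h'
        · exact h'.symm
        · omega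
    have := (a6 (sort x)).2.1 ⟨x, rfl⟩ ⟨y, hss.symm⟩ h1 h2
    exact congrArg Subtype.val this
  · intro x y
    constructor
    · exact fun hr β => β.2.2.2.2 x y hr
    · intro h
      by_contra hnr
      obtain ⟨β, hm, hsep⟩ := sep hn hMS hA x y hnr
      exact hsep (h ⟨β, hm⟩)

theorem statement0 (n : ℕ) (hn : 1 ≤ n) (C : Type) [TopologicalSpace C]
    (sort : C → Fin (n + 1)) (g : C → C) (r : C → C → Prop)
    (hMS : IsMS sort g r) :
    InIScP n C sort g r ↔ AxiomsA sort g r := by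
  exact ⟨fun h => fwd hMS h, fun h => bwd hn hMS h⟩

end ExpandingBelnap
end

section
/- For the four-element algebra M₀: (i) no subuniverse of M₀ × M₀ is contained in (δ₀,γ₀)⁻¹(≤) = {(a,b) : δ₀(a) ≤ γ₀(b)}, and no subuniverse of M₀ × M₀ is contained in (γ₀,δ₀)⁻¹(≤); (ii) the knowledge order ≤⁰ = (M₀ × {⊤⁰}) ∪ ({⊥⁰} × M₀) ∪ {(f⁰,f⁰),(t⁰,t⁰)} is the unique subuniverse of M₀ × M₀ that is maximal with respect to being contained in (γ₀,γ₀)⁻¹(≤); (iii) the converse relation ≥⁰ is the unique subuniverse of M₀ × M₀ maximal with respect to being contained in (δ₀,δ₀)⁻¹(≤). -/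
/-!
STATEMENT 12: For the four-element algebra M₀:
(i) no subuniverse of M₀ × M₀ is contained in (δ₀,γ₀)⁻¹(≤), and no subuniverse of
M₀ × M₀ is contained in (γ₀,δ₀)⁻¹(≤);
(ii) the knowledge order ≤⁰ is the unique subuniverse of M₀ × M₀ maximal with
respect to being contained in (γ₀,γ₀)⁻¹(≤);
(iii) the converse relation ≥⁰ is the unique subuniverse of M₀ × M₀ maximal with
respect to being contained in (δ₀,δ₀)⁻¹(≤).

We realise M₀ = {⊤⁰, f⁰, t⁰, ⊥⁰} as Bool × Bool via
⊤⁰ = (true, true), t⁰ = (true, false), f⁰ = (false, true), ⊥⁰ = (false, false).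
The knowledge order ≤ₖ is then the componentwise order (bottom ⊥⁰, top ⊤⁰, with
f⁰ and t⁰ incomparable), so ⊗ and ⊕ are the componentwise meet and join; the
truth order ≤ₜ is p ≤ₜ q ↔ p.1 ≤ q.1 ∧ q.2 ≤ p.2 (bottom f⁰, top t⁰, with ⊤⁰ and
⊥⁰ incomparable), so ∧ and ∨ are as below; and ¬ swaps the two components.
The carriers are γ₀(p) = p.1 (γ₀⁻¹(1) = {⊤⁰, t⁰}) and δ₀(p) = !p.2
(δ₀⁻¹(1) = {⊥⁰, t⁰}).
-/

namespace ExpandingBelnap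

/-- The carrier of the four-element algebra `M₀`. -/
abbrev MZ : Type := Bool × Bool

/-- The knowledge meet `⊗`. -/
def kmeet0 (p q : MZ) : MZ := (p.1 && q.1, p.2 && q.2)

/-- The knowledge join `⊕`. -/
def kjoin0 (p q : MZ) : MZ := (p.1 || q.1, p.2 || q.2)

/-- The truth meet `∧`. -/
def tmeet0 (p q : MZ) : MZ := (p.1 && q.1, p.2 || q.2)

/-- The truth join `∨`. -/
def tjoin0 (p q : MZ) : MZ := (p.1 || q.1, p.2 && q.2)

/-- The negation `¬`. -/
def neg0 (p : MZ) : MZ := (p.2, p.1)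

/-- The carrier `γ₀ : M₀ → {0, 1}`, with `γ₀⁻¹(1) = {⊤⁰, t⁰}`. -/
def gam0 (p : MZ) : Bool := p.1

/-- The carrier `δ₀ : M₀ → {0, 1}`, with `δ₀⁻¹(1) = {⊥⁰, t⁰}`. -/
def del0 (p : MZ) : Bool := !p.2

/-- The knowledge order `≤⁰ = (M₀ × {⊤⁰}) ∪ ({⊥⁰} × M₀) ∪ {(f⁰,f⁰), (t⁰,t⁰)}`,
which is the componentwise order in our realisation. -/
def le0 (p q : MZ) : Prop := p.1 ≤ q.1 ∧ p.2 ≤ q.2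

/-- `s` is a subuniverse of `M₀ × M₀`: it contains `(c, c)` for every constant `c`
(every element of `M₀` is a constant) and is closed under the coordinatewise
operations `⊗`, `⊕`, `∧`, `∨` and `¬`. -/
def Sub0 (s : Set (MZ × MZ)) : Prop :=
  (∀ c : MZ, (c, c) ∈ s) ∧
    ∀ p q, p ∈ s → q ∈ s →
      (kmeet0 p.1 q.1, kmeet0 p.2 q.2) ∈ s ∧
        (kjoin0 p.1 q.1, kjoin0 p.2 q.2) ∈ s ∧
        (tmeet0 p.1 q.1, tmeet0 p.2 q.2) ∈ s ∧
        (tjoin0 p.1 q.1, tjoin0 p.2 q.2) ∈ s ∧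
        (neg0 p.1, neg0 p.2) ∈ s

/-- `s` is a subuniverse of `M₀ × M₀` that is maximal with respect to being
contained in `target`. -/
def MaxSub0In (target : Set (MZ × MZ)) (s : Set (MZ × MZ)) : Prop :=
  Sub0 s ∧ s ⊆ target ∧ ∀ t, Sub0 t → t ⊆ target → s ⊆ t → t = s

lemma negmem {s : Set (MZ × MZ)} (h : Sub0 s) {x} (hx : x ∈ s) :
    (neg0 x.1, neg0 x.2) ∈ s := (h.2 x x hx hx).2.2.2.2

lemma key_g {s : Set (MZ × MZ)} (hs : Sub0 s)
    (hsub : s ⊆ {p | gam0 p.1 ≤ gam0 p.2}) : s ⊆ {p | le0 p.1 p.2} := by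
  intro x hx
  have h1 := hsub hx
  have h2 := hsub (negmem hs hx)
  obtain ⟨⟨a, b⟩, ⟨c, d⟩⟩ := x
  simp only [Set.mem_setOf_eq, gam0, del0, neg0, le0] at *
  clear hx hsub hs
  revert a b c d; decide

lemma key_d {s : Set (MZ × MZ)} (hs : Sub0 s)
    (hsub : s ⊆ {p | del0 p.1 ≤ del0 p.2}) : s ⊆ {p | le0 p.2 p.1} := by
  intro x hx
  have h1 := hsub hx
  have h2 := hsub (negmem hs hx)
  obtain ⟨⟨a, b⟩, ⟨c, d⟩⟩ := x
  simp only [Set.mem_setOf_eq, gam0, del0, neg0, le0] at *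
  clear hx hsub hs
  revert a b c d; decide

lemma sub_g : Sub0 {p : MZ × MZ | le0 p.1 p.2} := by
  constructor
  · intro c; exact ⟨le_refl _, le_refl _⟩
  · rintro ⟨⟨a, b⟩, ⟨c, d⟩⟩ ⟨⟨e, f⟩, ⟨g, h⟩⟩ hp hq
    simp only [Set.mem_setOf_eq, le0, kmeet0, kjoin0, tmeet0, tjoin0, neg0] at *
    revert a b c d e f g h; decide

lemma sub_d : Sub0 {p : MZ × MZ | le0 p.2 p.1} := by
  constructor
  · intro c; exact ⟨le_refl _, le_refl _⟩
  · rintro ⟨⟨a, b⟩, ⟨c, d⟩⟩ ⟨⟨e, f⟩, ⟨g, h⟩⟩ hp hq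
    simp only [Set.mem_setOf_eq, le0, kmeet0, kjoin0, tmeet0, tjoin0, neg0] at *
    revert a b c d e f g h; decide

theorem statement12 :
    (∀ s : Set (MZ × MZ), Sub0 s → ¬ s ⊆ {p | del0 p.1 ≤ gam0 p.2}) ∧
      (∀ s : Set (MZ × MZ), Sub0 s → ¬ s ⊆ {p | gam0 p.1 ≤ del0 p.2}) ∧
      (∀ s : Set (MZ × MZ),
        MaxSub0In {p | gam0 p.1 ≤ gam0 p.2} s ↔ s = {p | le0 p.1 p.2}) ∧
      (∀ s : Set (MZ × MZ),
        MaxSub0In {p | del0 p.1 ≤ del0 p.2} s ↔ s = {p | le0 p.2 p.1}) := by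
  refine ⟨?_, ?_, ?_, ?_⟩
  · intro s hs hsub
    have := hsub (hs.1 (false, false))
    simp only [Set.mem_setOf_eq, del0, gam0] at this
    exact absurd this (by decide)
  · intro s hs hsub
    have := hsub (hs.1 (true, true))
    simp only [Set.mem_setOf_eq, del0, gam0] at this
    exact absurd this (by decide)
  · intro s
    constructor
    · rintro ⟨hs, hsub, hmax⟩
      exact (hmax _ sub_g (fun x hx => hx.1) (key_g hs hsub)).symm
    · rintro rfl
      exact ⟨sub_g, fun x hx => hx.1, fun t ht hsub hst =>
        Set.Subset.antisymm (key_g ht hsub) hst⟩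
  · intro s
    have hd : {p : MZ × MZ | le0 p.2 p.1} ⊆ {p | del0 p.1 ≤ del0 p.2} := by
      rintro ⟨⟨a, b⟩, ⟨c, d⟩⟩ hx
      simp only [Set.mem_setOf_eq, le0, del0] at *
      revert a b c d; exact fun a b c d h => by revert h; revert a b c d; decide
    constructor
    · rintro ⟨hs, hsub, hmax⟩
      exact (hmax _ sub_d hd (key_d hs hsub)).symm
    · rintro rfl
      exact ⟨sub_d, hd, fun t ht hsub hst =>
        Set.Subset.antisymm (key_d ht hsub) hst⟩

end ExpandingBelnap
end
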